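/- arXiv:1004.3829 — 3 statements merged into one kernel-verified Lean document; each statement's English description precedes it below -/
import Mathlib

section
/- Let F be a field of characteristic 0, a ∈ F with a ≠ 0, and f = z² + y³ + x¹⁰ + a x⁷ y ∈ F[x,y,z]. Then the Tjurina number dim_F F[x,y,z]/(f, ∂f/∂x, ∂f/∂y, ∂f/∂z) equals 16. -/
open MvPolynomial Finsupp

set_option linter.unusedSectionVars false
set_option maxHeartbeats 1000000

section TjurinaAux

variable {F : Type} [Field F] [CharZero F]

/-- factorial of a multi-exponent over `Fin 3` -/
def fact3 (t : Fin 3 →₀ ℕ) : ℕ := (t 0).factorial * ((t 1).factorial * (t 2).factorial)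

noncomputable def lam (q : MvPolynomial (Fin 3) F) : MvPolynomial (Fin 3) F →ₗ[F] F :=
  ∑ t ∈ q.support, (coeff t q * (fact3 t : F)) • lcoeff F t

theorem lam_monomial (q : MvPolynomial (Fin 3) F) (s : Fin 3 →₀ ℕ) (c : F) :
    lam q (monomial s c) = coeff s q * (fact3 s : F) * c := by
  classical
  rw [lam, LinearMap.sum_apply]
  simp only [LinearMap.smul_apply, lcoeff_apply, coeff_monomial, smul_eq_mul]
  rw [Finset.sum_eq_single s]
  · simp
  · intro b _ hb
    simp [Ne.symm hb]
  · intro hs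
    simp [MvPolynomial.notMem_support_iff.mp hs]

theorem coeff_pderiv' (i : Fin 3) (q : MvPolynomial (Fin 3) F) (s : Fin 3 →₀ ℕ) :
    coeff s (pderiv i q) = ((s i : F) + 1) * coeff (s + single i 1) q := by
  classical
  induction q using MvPolynomial.induction_on' with
  | add p r hp hr => simp [hp, hr, mul_add]
  | monomial t c =>
    rw [pderiv_monomial]
    by_cases h : t = s + single i 1
    · subst h
      have h1 : (s + single i 1) - (single i 1) = s := add_tsub_cancel_right _ _
      have h2 : ((s + single i 1 : Fin 3 →₀ ℕ)) i = s i + 1 := by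
        simp
      rw [coeff_monomial, coeff_monomial, h1, h2, if_pos rfl, if_pos rfl]
      push_cast; ring
    · rw [coeff_monomial, coeff_monomial, if_neg h]
      by_cases h0 : t i = 0
      · simp [h0]
      · have : ¬ (t - single i 1 = s) := by
          intro hts
          apply h
          have hle : single i 1 ≤ t := by
            rw [Finsupp.single_le_iff]
            omega
          rw [← hts, tsub_add_cancel_of_le hle]
        rw [if_neg this, mul_zero]

theorem fact3_add_single (s : Fin 3 →₀ ℕ) (i : Fin 3) :
    fact3 (s + single i 1) = (s i + 1) * fact3 s := by
  have h : ∀ j, ((s + single i 1 : Fin 3 →₀ ℕ)) j = s j + (single i 1 : Fin 3 →₀ ℕ) j := by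
    intro j; simp
  fin_cases i <;>
    simp [fact3, h, Finsupp.single_apply, Nat.factorial_succ] <;> ring

theorem lam_X_mul (q : MvPolynomial (Fin 3) F) (i : Fin 3) (p : MvPolynomial (Fin 3) F) :
    lam q (X i * p) = lam (pderiv i q) p := by
  have : lam q ∘ₗ LinearMap.mulLeft F (X i) = lam (pderiv i q) := by
    apply MvPolynomial.linearMap_ext
    intro s
    refine LinearMap.ext fun c => ?_
    simp only [LinearMap.comp_apply, LinearMap.mulLeft_apply]
    rw [show (X i : MvPolynomial (Fin 3) F) * monomial s c = monomial (s + single i 1) c by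
      rw [X, monomial_mul, one_mul, add_comm]]
    rw [lam_monomial, lam_monomial, coeff_pderiv', fact3_add_single]
    push_cast
    ring
  exact DFunLike.congr_fun this p

theorem lam_X_pow_mul (q : MvPolynomial (Fin 3) F) (i : Fin 3) (n : ℕ)
    (p : MvPolynomial (Fin 3) F) :
    lam q (X i ^ n * p) = lam ((pderiv i)^[n] q) p := by
  induction n generalizing q with
  | zero => simp
  | succ k ih =>
    rw [pow_succ, mul_comm (X i ^ k) (X i), mul_assoc, lam_X_mul, ih,
      Function.iterate_succ_apply]

theorem lam_add_left (q r : MvPolynomial (Fin 3) F) (p : MvPolynomial (Fin 3) F) :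
    lam (q + r) p = lam q p + lam r p := by
  have : lam (q + r) = lam q + lam r := by
    apply MvPolynomial.linearMap_ext
    intro s; refine LinearMap.ext fun c => ?_
    simp [lam_monomial, coeff_add]
    ring
  simp [this]

theorem lam_smul_left (c : F) (q : MvPolynomial (Fin 3) F) (p : MvPolynomial (Fin 3) F) :
    lam (c • q) p = c * lam q p := by
  have : lam (c • q) = c • lam q := by
    apply MvPolynomial.linearMap_ext
    intro s; refine LinearMap.ext fun d => ?_
    simp [lam_monomial, coeff_smul]
    ring
  simp [this]

theorem lam_zero_left (p : MvPolynomial (Fin 3) F) : lam (0 : MvPolynomial (Fin 3) F) p = 0 := by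
  have : lam (0 : MvPolynomial (Fin 3) F) = 0 := by
    apply MvPolynomial.linearMap_ext
    intro s; refine LinearMap.ext fun c => ?_
    simp [lam_monomial]
  simp [this]

theorem lam_C_mul (q : MvPolynomial (Fin 3) F) (c : F) (p : MvPolynomial (Fin 3) F) :
    lam q (C c * p) = c * lam q p := by
  rw [← smul_eq_C_mul, map_smul, smul_eq_mul]

theorem pderiv_iterate_monomial (i : Fin 3) (k : ℕ) (t : Fin 3 →₀ ℕ) (c : F) :
    (pderiv i)^[k] (monomial t c) =
      monomial (t - single i k) (c * ((t i).descFactorial k : F)) := by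
  induction k with
  | zero => simp
  | succ n ih =>
    rw [Function.iterate_succ_apply', ih, pderiv_monomial]
    have h1 : t - single i n - single i 1 = t - single i (n + 1) := by
      rw [tsub_tsub, ← Finsupp.single_add]
    have h2 : ((t - single i n : Fin 3 →₀ ℕ)) i = t i - n := by
      simp
    rw [h1, h2, Nat.descFactorial_succ]
    congr 1
    push_cast [Nat.descFactorial_succ]
    ring

theorem pderiv_iterate_add (i : Fin 3) (k : ℕ) (p q : MvPolynomial (Fin 3) F) :
    (pderiv i)^[k] (p + q) = (pderiv i)^[k] p + (pderiv i)^[k] q := by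
  induction k with
  | zero => simp
  | succ n ih => simp [Function.iterate_succ_apply', ih]

theorem lam_vanish_on_span (q : MvPolynomial (Fin 3) F) (S : Set (MvPolynomial (Fin 3) F))
    (h : ∀ g ∈ S, ∀ p, lam q (g * p) = 0) :
    ∀ p ∈ Ideal.span S, lam q p = 0 := by
  intro p hp
  have key : ∀ r ∈ Ideal.span S, ∀ u, lam q (r * u) = 0 := by
    intro r hr
    induction hr using Submodule.span_induction with
    | mem g hg => exact h g hg
    | zero => simp
    | add x y _ _ hx hy => intro u; rw [add_mul, map_add, hx, hy, add_zero]
    | smul x y _ hy =>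
        intro u
        rw [smul_eq_mul, mul_assoc, mul_comm x (y * u), mul_assoc]
        exact hy _
  simpa using key p hp 1

theorem pair_eq {x y u w : ℕ} :
    (single 0 x + single 1 y : Fin 3 →₀ ℕ) = single 0 u + single 1 w ↔ (x = u ∧ y = w) := by
  constructor
  · intro h
    rw [Finsupp.ext_iff] at h
    have h0 := h 0
    have h1 := h 1
    simp [Finsupp.single_apply] at h0 h1
    exact ⟨h0, h1⟩
  · rintro ⟨rfl, rfl⟩; rfl


noncomputable def fp (a : F) : MvPolynomial (Fin 3) F :=
  X 2 ^ 2 + X 1 ^ 3 + X 0 ^ 10 + C a * X 0 ^ 7 * X 1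

noncomputable def Ij (a : F) : Ideal (MvPolynomial (Fin 3) F) :=
  Ideal.span {fp a, pderiv 0 (fp a), pderiv 1 (fp a), pderiv 2 (fp a)}

theorem hd0 (a : F) : pderiv 0 (fp a) = C (10:F) * X 0 ^ 9 + C (7 * a) * (X 0 ^ 6 * X 1) := by
  rw [fp]
  simp [pderiv_X_self, pderiv_X_of_ne, map_ofNat, map_mul]
  ring

theorem hd1 (a : F) : pderiv 1 (fp a) = C (3:F) * X 1 ^ 2 + C a * X 0 ^ 7 := by
  rw [fp]
  simp [pderiv_X_self, pderiv_X_of_ne, map_ofNat]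

theorem hd2 (a : F) : pderiv 2 (fp a) = C (2:F) * X 2 := by
  rw [fp]
  simp [pderiv_X_self, pderiv_X_of_ne, map_ofNat]

theorem lam_vanish_Ij (a : F) (q : MvPolynomial (Fin 3) F)
    (h2 : pderiv 2 q = 0)
    (hf1 : (pderiv 1)^[3] q = 0)
    (hf0 : (pderiv 0)^[10] q = 0)
    (hf01 : pderiv 1 ((pderiv 0)^[7] q) = 0)
    (hd1c : (3:F) • ((pderiv 1)^[2] q) + a • ((pderiv 0)^[7] q) = 0)
    (hd0c : (10:F) • ((pderiv 0)^[9] q) + (7*a) • (pderiv 1 ((pderiv 0)^[6] q)) = 0) :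
    ∀ p ∈ Ij a, lam q p = 0 := by
  have hf2 : (pderiv 2)^[2] q = 0 := by
    rw [Function.iterate_succ_apply', Function.iterate_one, h2, map_zero]
  apply lam_vanish_on_span
  intro g hg p
  simp only [Set.mem_insert_iff, Set.mem_singleton_iff] at hg
  rcases hg with rfl | rfl | rfl | rfl
  · -- g = fp a
    have hexp : fp a * p
        = X 2 ^ 2 * p + X 1 ^ 3 * p + X 0 ^ 10 * p + C a * (X 0 ^ 7 * (X 1 * p)) := by
      rw [fp]; ring
    rw [hexp, map_add, map_add, map_add, lam_X_pow_mul, lam_X_pow_mul, lam_X_pow_mul,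
      lam_C_mul, lam_X_pow_mul, lam_X_mul, hf2, hf1, hf0, hf01, lam_zero_left]
    ring
  · -- g = pderiv 0 (fp a)
    have hexp : pderiv 0 (fp a) * p
        = C (10:F) * (X 0 ^ 9 * p) + C (7*a) * (X 0 ^ 6 * (X 1 * p)) := by
      rw [hd0]; ring
    rw [hexp, map_add, lam_C_mul, lam_C_mul, lam_X_pow_mul, lam_X_pow_mul, lam_X_mul,
      ← lam_smul_left, ← lam_smul_left, ← lam_add_left, hd0c, lam_zero_left]
  · -- g = pderiv 1 (fp a)
    have hexp : pderiv 1 (fp a) * p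
        = C (3:F) * (X 1 ^ 2 * p) + C a * (X 0 ^ 7 * p) := by
      rw [hd1]; ring
    rw [hexp, map_add, lam_C_mul, lam_C_mul, lam_X_pow_mul, lam_X_pow_mul,
      ← lam_smul_left, ← lam_smul_left, ← lam_add_left, hd1c, lam_zero_left]
  · -- g = pderiv 2 (fp a)
    have hexp : pderiv 2 (fp a) * p = C (2:F) * (X 2 * p) := by
      rw [hd2]; ring
    rw [hexp, lam_C_mul, lam_X_mul, h2, lam_zero_left, mul_zero]

theorem vanish_monomial (a : F) (t : Fin 3 →₀ ℕ)
    (ht0 : t 0 ≤ 6) (ht1 : t 1 ≤ 1) (ht2 : t 2 = 0) (ht05 : t 0 ≤ 5 ∨ t 1 = 0) :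
    ∀ p ∈ Ij a, lam (monomial t (1:F)) p = 0 := by
  apply lam_vanish_Ij
  · rw [pderiv_monomial, ht2]
    simp
  · rw [pderiv_iterate_monomial, Nat.descFactorial_of_lt (by omega)]
    simp
  · rw [pderiv_iterate_monomial, Nat.descFactorial_of_lt (by omega)]
    simp
  · rw [pderiv_iterate_monomial, Nat.descFactorial_of_lt (by omega)]
    simp
  · rw [pderiv_iterate_monomial, pderiv_iterate_monomial,
      Nat.descFactorial_of_lt (show t 1 < 2 by omega),
      Nat.descFactorial_of_lt (show t 0 < 7 by omega)]
    simp
  · rw [pderiv_iterate_monomial, pderiv_iterate_monomial,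
      Nat.descFactorial_of_lt (show t 0 < 9 by omega), pderiv_monomial]
    have htt : ((t - single 0 6 : Fin 3 →₀ ℕ)) 1 = t 1 := by simp
    rw [htt]
    rcases ht05 with h | h
    · rw [Nat.descFactorial_of_lt (show t 0 < 6 by omega)]
      simp
    · rw [h]
      simp


theorem pairApp0 (x y : ℕ) : ((single 0 x + single 1 y : Fin 3 →₀ ℕ)) 0 = x := by simp
theorem pairApp1 (x y : ℕ) : ((single 0 x + single 1 y : Fin 3 →₀ ℕ)) 1 = y := by simp
theorem pairApp2 (x y : ℕ) : ((single 0 x + single 1 y : Fin 3 →₀ ℕ)) 2 = 0 := by simp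

theorem pairSub0 (x y k : ℕ) :
    (single 0 x + single 1 y : Fin 3 →₀ ℕ) - single 0 k = single 0 (x - k) + single 1 y := by
  ext j
  fin_cases j <;> simp [Finsupp.tsub_apply, Finsupp.single_apply]

theorem pairSub1 (x y k : ℕ) :
    (single 0 x + single 1 y : Fin 3 →₀ ℕ) - single 1 k = single 0 x + single 1 (y - k) := by
  ext j
  fin_cases j <;> simp [Finsupp.tsub_apply, Finsupp.single_apply]

theorem vanish_q7 (a : F) : ∀ p ∈ Ij a,
    lam (monomial (single 0 7 + single 1 0) (1:F)
      + monomial (single 0 0 + single 1 2) (-(840*a))) p = 0 := by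
  apply lam_vanish_Ij <;>
  · simp only [pderiv_iterate_add, map_add, pderiv_iterate_monomial, pderiv_monomial,
      pairApp0, pairApp1, pairApp2, pairSub0, pairSub1, Nat.descFactorial, smul_add,
      smul_monomial]
    norm_num [map_ofNat]
    try ring

theorem vanish_q8 (a : F) : ∀ p ∈ Ij a,
    lam (monomial (single 0 8 + single 1 0) (1:F)
      + monomial (single 0 1 + single 1 2) (-(6720*a))) p = 0 := by
  apply lam_vanish_Ij <;>
  · simp only [pderiv_iterate_add, map_add, pderiv_iterate_monomial, pderiv_monomial,
      pairApp0, pairApp1, pairApp2, pairSub0, pairSub1, Nat.descFactorial, smul_add,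
      smul_monomial]
    norm_num [map_ofNat]
    try ring

theorem vanish_q15 (a : F) : ∀ p ∈ Ij a,
    lam (monomial (single 0 6 + single 1 1) (720:F)
      + (monomial (single 0 9 + single 1 0) (-a)
        + monomial (single 0 2 + single 1 2) (30240*a^2))) p = 0 := by
  apply lam_vanish_Ij <;>
  · simp only [pderiv_iterate_add, map_add, pderiv_iterate_monomial, pderiv_monomial,
      pairApp0, pairApp1, pairApp2, pairSub0, pairSub1, Nat.descFactorial, smul_add,
      smul_monomial]
    norm_num [map_ofNat]
    try ring


def ex : Fin 16 → ℕ := ![0,1,2,3,4,5,6,7,8,0,1,2,3,4,5,6]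
def ey : Fin 16 → ℕ := ![0,0,0,0,0,0,0,0,0,1,1,1,1,1,1,1]

theorem ex_le (i : Fin 16) : ex i ≤ 8 := by revert i; decide
theorem ey_le (i : Fin 16) : ey i ≤ 1 := by revert i; decide
theorem exy_inj (i j : Fin 16) : (ex j = ex i ∧ ey j = ey i) ↔ j = i := by
  revert i j; decide

noncomputable def cf : Fin 16 → F := fun k => if k = 15 then 720 else 1

noncomputable def corr (a : F) : Fin 16 → MvPolynomial (Fin 3) F := fun k =>
  if k = 7 then monomial (single 0 0 + single 1 2) (-(840*a))
  else if k = 8 then monomial (single 0 1 + single 1 2) (-(6720*a))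
  else if k = 15 then monomial (single 0 9 + single 1 0) (-a)
      + monomial (single 0 2 + single 1 2) (30240*a^2)
  else 0

noncomputable def qd (a : F) : Fin 16 → MvPolynomial (Fin 3) F := fun k =>
  monomial (single 0 (ex k) + single 1 (ey k)) (cf k) + corr a k

theorem cf_ne_zero (k : Fin 16) : (cf k : F) ≠ 0 := by
  rw [cf]
  split_ifs <;> norm_num

theorem coeff_corr (a : F) (i j : Fin 16) :
    coeff (single 0 (ex i) + single 1 (ey i)) (corr a j) = 0 := by
  classical
  have h1 := ex_le i
  have h2 := ey_le i
  rw [corr]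
  split_ifs with hc1 hc2 hc3
  · rw [coeff_monomial, if_neg]
    rw [pair_eq]
    omega
  · rw [coeff_monomial, if_neg]
    rw [pair_eq]
    omega
  · rw [coeff_add, coeff_monomial, coeff_monomial, if_neg, if_neg, add_zero]
    · rw [pair_eq]; omega
    · rw [pair_eq]; omega
  · exact coeff_zero _


theorem mem_Ij (a : F) {g : MvPolynomial (Fin 3) F}
    (hg : g ∈ ({fp a, pderiv 0 (fp a), pderiv 1 (fp a), pderiv 2 (fp a)}
      : Set (MvPolynomial (Fin 3) F))) : g ∈ Ij a := by
  rw [Ij]; exact Ideal.subset_span hg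

theorem coeff_qd (a : F) (i j : Fin 16) :
    coeff (single 0 (ex i) + single 1 (ey i)) (qd a j) = if j = i then cf j else 0 := by
  classical
  rw [qd, coeff_add, coeff_corr, add_zero, coeff_monomial]
  rw [if_congr (Iff.trans pair_eq (exy_inj i j)) rfl rfl]

theorem fact3_ne_zero (t : Fin 3 →₀ ℕ) : fact3 t ≠ 0 := by
  rw [fact3]
  exact (Nat.mul_pos (Nat.factorial_pos _)
    (Nat.mul_pos (Nat.factorial_pos _) (Nat.factorial_pos _))).ne'

theorem X2_mem (a : F) : (X 2 : MvPolynomial (Fin 3) F) ∈ Ij a := by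
  have h : (X 2 : MvPolynomial (Fin 3) F) = C (2⁻¹ : F) * pderiv 2 (fp a) := by
    rw [hd2, ← mul_assoc, ← map_mul]
    norm_num
  rw [h]
  exact Ideal.mul_mem_left _ _ (mem_Ij a (by simp))

theorem p2_mem (a : F) (ha : a ≠ 0) : (X 0 ^ 7 * X 1 : MvPolynomial (Fin 3) F) ∈ Ij a := by
  have key : C a * (X 0 ^ 7 * X 1)
      = C (-30:F) * fp a + C (10:F) * (X 1 * pderiv 1 (fp a))
        + C (3:F) * (X 0 * pderiv 0 (fp a)) + C (15:F) * (X 2 * pderiv 2 (fp a)) := by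
    rw [hd0, hd1, hd2]
    rw [fp]
    simp only [map_neg, map_ofNat, map_mul]
    ring
  have h2 : (X 0 ^ 7 * X 1 : MvPolynomial (Fin 3) F) = C a⁻¹ * (C a * (X 0 ^ 7 * X 1)) := by
    rw [← mul_assoc, ← map_mul, inv_mul_cancel₀ ha, map_one, one_mul]
  rw [h2, key]
  have m0 : fp a ∈ Ij a := mem_Ij a (by simp)
  have m1 : pderiv 0 (fp a) ∈ Ij a := mem_Ij a (by simp)
  have m2 : pderiv 1 (fp a) ∈ Ij a := mem_Ij a (by simp)
  have m3 : pderiv 2 (fp a) ∈ Ij a := mem_Ij a (by simp)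
  apply Ideal.mul_mem_left
  exact Ideal.add_mem _ (Ideal.add_mem _ (Ideal.add_mem _
    (Ideal.mul_mem_left _ _ m0) (Ideal.mul_mem_left _ _ (Ideal.mul_mem_left _ _ m2)))
    (Ideal.mul_mem_left _ _ (Ideal.mul_mem_left _ _ m1)))
    (Ideal.mul_mem_left _ _ (Ideal.mul_mem_left _ _ m3))

theorem vanish_monomial' (a : F) (x y : ℕ) (hx : x ≤ 6) (hy : y ≤ 1) (hxy : x ≤ 5 ∨ y = 0) :
    ∀ p ∈ Ij a, lam (monomial (single 0 x + single 1 y) (1:F)) p = 0 := by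
  apply vanish_monomial a
  · rw [pairApp0]; omega
  · rw [pairApp1]; omega
  · rw [pairApp2]
  · rw [pairApp0, pairApp1]; omega


theorem qd_eq_monomial (a : F) (k : Fin 16) (hk7 : k ≠ 7) (hk8 : k ≠ 8) (hk15 : k ≠ 15) :
    qd a k = monomial (single 0 (ex k) + single 1 (ey k)) (1:F) := by
  simp only [qd, corr, cf, if_neg hk7, if_neg hk8, if_neg hk15, add_zero]

theorem main_aux (a : F) (ha : a ≠ 0) :
    Module.finrank F (MvPolynomial (Fin 3) F ⧸ Ij a) = 16 := by
  classical
  set Q := MvPolynomial (Fin 3) F ⧸ Ij a with hQ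
  let φ : MvPolynomial (Fin 3) F →ₐ[F] Q := Ideal.Quotient.mkₐ F (Ij a)
  have hφ0 : ∀ r ∈ Ij a, φ r = 0 := by
    intro r hr
    show Ideal.Quotient.mkₐ F (Ij a) r = 0
    rwa [Ideal.Quotient.mkₐ_eq_mk, Ideal.Quotient.eq_zero_iff_mem]
  have hφC : ∀ (c : F) (r : MvPolynomial (Fin 3) F), φ (C c * r) = c • φ r := by
    intro c r
    rw [map_mul, show (C c : MvPolynomial (Fin 3) F) = algebraMap F _ c from rfl,
      AlgHom.commutes, ← Algebra.smul_def]
  set v : Fin 16 → Q := fun k => φ (X 0 ^ ex k * X 1 ^ ey k) with hv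
  set W := Submodule.span F (Set.range v) with hW
  -- spanning
  have hbase : ∀ x y : ℕ, ((y = 0 ∧ x ≤ 8) ∨ (y = 1 ∧ x ≤ 6)) →
      φ (X 0 ^ x * X 1 ^ y) ∈ W := by
    rintro x y (⟨rfl, hx⟩ | ⟨rfl, hx⟩)
    · interval_cases x
      · exact Submodule.subset_span ⟨(0 : Fin 16), rfl⟩
      · exact Submodule.subset_span ⟨(1 : Fin 16), rfl⟩
      · exact Submodule.subset_span ⟨(2 : Fin 16), rfl⟩
      · exact Submodule.subset_span ⟨(3 : Fin 16), rfl⟩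
      · exact Submodule.subset_span ⟨(4 : Fin 16), rfl⟩
      · exact Submodule.subset_span ⟨(5 : Fin 16), rfl⟩
      · exact Submodule.subset_span ⟨(6 : Fin 16), rfl⟩
      · exact Submodule.subset_span ⟨(7 : Fin 16), rfl⟩
      · exact Submodule.subset_span ⟨(8 : Fin 16), rfl⟩
    · interval_cases x
      · exact Submodule.subset_span ⟨(9 : Fin 16), rfl⟩
      · exact Submodule.subset_span ⟨(10 : Fin 16), rfl⟩
      · exact Submodule.subset_span ⟨(11 : Fin 16), rfl⟩
      · exact Submodule.subset_span ⟨(12 : Fin 16), rfl⟩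
      · exact Submodule.subset_span ⟨(13 : Fin 16), rfl⟩
      · exact Submodule.subset_span ⟨(14 : Fin 16), rfl⟩
      · exact Submodule.subset_span ⟨(15 : Fin 16), rfl⟩
  have hRp2 : ∀ x y : ℕ, 7 ≤ x → 1 ≤ y → φ (X 0 ^ x * X 1 ^ y) = 0 := by
    intro x y hx hy
    obtain ⟨n, rfl⟩ := Nat.exists_eq_add_of_le hx
    obtain ⟨m, rfl⟩ := Nat.exists_eq_add_of_le hy
    apply hφ0
    rw [show (X 0 ^ (7+n) * X 1 ^ (1+m) : MvPolynomial (Fin 3) F)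
        = (X 0 ^ n * X 1 ^ m) * (X 0 ^ 7 * X 1) by ring]
    exact Ideal.mul_mem_left _ _ (p2_mem a ha)
  have hR1 : ∀ x y : ℕ, 2 ≤ y →
      φ (X 0 ^ x * X 1 ^ y) = (-(3⁻¹ * a)) • φ (X 0 ^ (x+7) * X 1 ^ (y-2)) := by
    intro x y hy
    obtain ⟨j, rfl⟩ := Nat.exists_eq_add_of_le hy
    rw [show 2 + j - 2 = j by omega]
    have hmem : (X 0 ^ x * X 1 ^ j) * pderiv 1 (fp a) ∈ Ij a :=
      Ideal.mul_mem_left _ _ (mem_Ij a (by simp))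
    have hexp : (X 0 ^ x * X 1 ^ j) * pderiv 1 (fp a)
        = C (3:F) * (X 0 ^ x * X 1 ^ (2+j)) + C a * (X 0 ^ (x+7) * X 1 ^ j) := by
      rw [hd1]; ring
    have h0 : (3:F) • φ (X 0 ^ x * X 1 ^ (2+j)) + a • φ (X 0 ^ (x+7) * X 1 ^ j) = 0 := by
      rw [← hφC, ← hφC, ← map_add, ← hexp]
      exact hφ0 _ hmem
    calc φ (X 0 ^ x * X 1 ^ (2+j))
        = (3⁻¹ : F) • ((3:F) • φ (X 0 ^ x * X 1 ^ (2+j))) := by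
          rw [smul_smul, inv_mul_cancel₀ (by norm_num : (3:F) ≠ 0), one_smul]
      _ = (3⁻¹ : F) • (-(a • φ (X 0 ^ (x+7) * X 1 ^ j))) := by
          rw [eq_neg_of_add_eq_zero_left h0]
      _ = (-(3⁻¹ * a)) • φ (X 0 ^ (x+7) * X 1 ^ j) := by
          rw [smul_neg, smul_smul, neg_smul]
  have hR0 : ∀ x : ℕ, 9 ≤ x →
      φ (X 0 ^ x * X 1 ^ 0) = (-(10⁻¹ * (7*a))) • φ (X 0 ^ (x-3) * X 1 ^ 1) := by
    intro x hx
    obtain ⟨n, rfl⟩ := Nat.exists_eq_add_of_le hx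
    rw [show 9 + n - 3 = 6 + n by omega]
    have hmem : (X 0 ^ n) * pderiv 0 (fp a) ∈ Ij a :=
      Ideal.mul_mem_left _ _ (mem_Ij a (by simp))
    have hexp : (X 0 ^ n) * pderiv 0 (fp a)
        = C (10:F) * (X 0 ^ (9+n) * X 1 ^ 0) + C (7*a) * (X 0 ^ (6+n) * X 1 ^ 1) := by
      rw [hd0]; ring
    have h0 : (10:F) • φ (X 0 ^ (9+n) * X 1 ^ 0) + (7*a) • φ (X 0 ^ (6+n) * X 1 ^ 1) = 0 := by
      rw [← hφC, ← hφC, ← map_add, ← hexp]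
      exact hφ0 _ hmem
    calc φ (X 0 ^ (9+n) * X 1 ^ 0)
        = (10⁻¹ : F) • ((10:F) • φ (X 0 ^ (9+n) * X 1 ^ 0)) := by
          rw [smul_smul, inv_mul_cancel₀ (by norm_num : (10:F) ≠ 0), one_smul]
      _ = (10⁻¹ : F) • (-((7*a) • φ (X 0 ^ (6+n) * X 1 ^ 1))) := by
          rw [eq_neg_of_add_eq_zero_left h0]
      _ = (-(10⁻¹ * (7*a))) • φ (X 0 ^ (6+n) * X 1 ^ 1) := by
          rw [smul_neg, smul_smul, neg_smul]
  have hXmono_span : ∀ x y z : ℕ, φ (X 0 ^ x * X 1 ^ y * X 2 ^ z) ∈ W := by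
    intro x y z
    rcases z with _ | n
    · rw [pow_zero, mul_one]
      by_cases hy2 : 2 ≤ y
      · rw [hR1 x y hy2]
        by_cases hy3 : 3 ≤ y
        · rw [hRp2 _ _ (by omega) (by omega)]
          simp
        · rw [show y - 2 = 0 by omega]
          by_cases hx1 : x ≤ 1
          · exact Submodule.smul_mem _ _ (hbase (x+7) 0 (Or.inl ⟨rfl, by omega⟩))
          · rw [hR0 (x+7) (by omega)]
            by_cases hx2 : x = 2
            · subst hx2
              rw [show 2 + 7 - 3 = 6 by norm_num]
              exact Submodule.smul_mem _ _ (Submodule.smul_mem _ _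
                (hbase 6 1 (Or.inr ⟨rfl, by norm_num⟩)))
            · rw [hRp2 (x+7-3) 1 (by omega) le_rfl]
              simp
      · by_cases hy0 : y = 0
        · subst hy0
          by_cases hx8 : x ≤ 8
          · exact hbase x 0 (Or.inl ⟨rfl, hx8⟩)
          · rw [hR0 x (by omega)]
            by_cases hx9 : x = 9
            · subst hx9
              rw [show 9 - 3 = 6 from rfl]
              exact Submodule.smul_mem _ _ (hbase 6 1 (Or.inr ⟨rfl, by norm_num⟩))
            · rw [hRp2 (x-3) 1 (by omega) le_rfl]
              simp
        · have hy1 : y = 1 := by omega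
          subst hy1
          by_cases hx6 : x ≤ 6
          · exact hbase x 1 (Or.inr ⟨rfl, hx6⟩)
          · rw [hRp2 x 1 (by omega) le_rfl]
            simp
    · rw [show (X 0 ^ x * X 1 ^ y * X 2 ^ (n+1) : MvPolynomial (Fin 3) F)
          = (X 0 ^ x * X 1 ^ y * X 2 ^ n) * X 2 by ring]
      rw [hφ0 _ (Ideal.mul_mem_left _ _ (X2_mem a))]
      exact zero_mem _
  have hspan : ⊤ ≤ W := by
    intro q _
    obtain ⟨p, rfl⟩ := Ideal.Quotient.mkₐ_surjective F (Ij a) q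
    rw [show p = ∑ t ∈ p.support, monomial t (coeff t p) from (support_sum_monomial_coeff p).symm,
      map_sum]
    apply Submodule.sum_mem
    intro t _
    rw [show monomial t (coeff t p) = (coeff t p) • monomial t (1:F) by
      rw [smul_monomial, smul_eq_mul, mul_one]]
    rw [map_smul]
    apply Submodule.smul_mem
    have ht : t = single 0 (t 0) + single 1 (t 1) + single 2 (t 2) := by
      ext j
      fin_cases j <;> simp [Finsupp.single_apply]
    have hdec : monomial t (1:F) = X 0 ^ (t 0) * X 1 ^ (t 1) * X 2 ^ (t 2) := by
      rw [X_pow_eq_monomial, X_pow_eq_monomial, X_pow_eq_monomial, monomial_mul, monomial_mul,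
        mul_one, mul_one]
      exact congrArg (fun s => monomial s (1:F)) ht
    rw [hdec]
    exact hXmono_span _ _ _
  -- vanishing functionals
  have hvan : ∀ k : Fin 16, ∀ p ∈ Ij a, lam (qd a k) p = 0 := by
    intro k
    fin_cases k
    · show ∀ p ∈ Ij a, lam (qd a (0:Fin 16)) p = 0
      rw [qd_eq_monomial a 0 (by decide) (by decide) (by decide),
        show ex 0 = 0 from by decide, show ey 0 = 0 from by decide]
      exact vanish_monomial' a 0 0 (by norm_num) (by norm_num) (by norm_num)
    · show ∀ p ∈ Ij a, lam (qd a (1:Fin 16)) p = 0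
      rw [qd_eq_monomial a 1 (by decide) (by decide) (by decide),
        show ex 1 = 1 from by decide, show ey 1 = 0 from by decide]
      exact vanish_monomial' a 1 0 (by norm_num) (by norm_num) (by norm_num)
    · show ∀ p ∈ Ij a, lam (qd a (2:Fin 16)) p = 0
      rw [qd_eq_monomial a 2 (by decide) (by decide) (by decide),
        show ex 2 = 2 from by decide, show ey 2 = 0 from by decide]
      exact vanish_monomial' a 2 0 (by norm_num) (by norm_num) (by norm_num)
    · show ∀ p ∈ Ij a, lam (qd a (3:Fin 16)) p = 0
      rw [qd_eq_monomial a 3 (by decide) (by decide) (by decide),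
        show ex 3 = 3 from by decide, show ey 3 = 0 from by decide]
      exact vanish_monomial' a 3 0 (by norm_num) (by norm_num) (by norm_num)
    · show ∀ p ∈ Ij a, lam (qd a (4:Fin 16)) p = 0
      rw [qd_eq_monomial a 4 (by decide) (by decide) (by decide),
        show ex 4 = 4 from by decide, show ey 4 = 0 from by decide]
      exact vanish_monomial' a 4 0 (by norm_num) (by norm_num) (by norm_num)
    · show ∀ p ∈ Ij a, lam (qd a (5:Fin 16)) p = 0
      rw [qd_eq_monomial a 5 (by decide) (by decide) (by decide),
        show ex 5 = 5 from by decide, show ey 5 = 0 from by decide]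
      exact vanish_monomial' a 5 0 (by norm_num) (by norm_num) (by norm_num)
    · show ∀ p ∈ Ij a, lam (qd a (6:Fin 16)) p = 0
      rw [qd_eq_monomial a 6 (by decide) (by decide) (by decide),
        show ex 6 = 6 from by decide, show ey 6 = 0 from by decide]
      exact vanish_monomial' a 6 0 (by norm_num) (by norm_num) (by norm_num)
    · show ∀ p ∈ Ij a, lam (qd a (7:Fin 16)) p = 0
      have h7 : qd a 7 = monomial (single 0 7 + single 1 0) (1:F)
          + monomial (single 0 0 + single 1 2) (-(840*a)) := by
        simp only [qd, corr, cf, if_true]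
        rw [if_neg (show (7:Fin 16) ≠ 15 by decide),
          show ex 7 = 7 from by decide, show ey 7 = 0 from by decide]
      rw [h7]
      exact vanish_q7 a
    · show ∀ p ∈ Ij a, lam (qd a (8:Fin 16)) p = 0
      have h8 : qd a 8 = monomial (single 0 8 + single 1 0) (1:F)
          + monomial (single 0 1 + single 1 2) (-(6720*a)) := by
        simp only [qd, corr, cf, if_true]
        rw [if_neg (show (8:Fin 16) ≠ 15 by decide), if_neg (show (8:Fin 16) ≠ 7 by decide),
          show ex 8 = 8 from by decide, show ey 8 = 0 from by decide]
      rw [h8]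
      exact vanish_q8 a
    · show ∀ p ∈ Ij a, lam (qd a (9:Fin 16)) p = 0
      rw [qd_eq_monomial a 9 (by decide) (by decide) (by decide),
        show ex 9 = 0 from by decide, show ey 9 = 1 from by decide]
      exact vanish_monomial' a 0 1 (by norm_num) (by norm_num) (by norm_num)
    · show ∀ p ∈ Ij a, lam (qd a (10:Fin 16)) p = 0
      rw [qd_eq_monomial a 10 (by decide) (by decide) (by decide),
        show ex 10 = 1 from by decide, show ey 10 = 1 from by decide]
      exact vanish_monomial' a 1 1 (by norm_num) (by norm_num) (by norm_num)
    · show ∀ p ∈ Ij a, lam (qd a (11:Fin 16)) p = 0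
      rw [qd_eq_monomial a 11 (by decide) (by decide) (by decide),
        show ex 11 = 2 from by decide, show ey 11 = 1 from by decide]
      exact vanish_monomial' a 2 1 (by norm_num) (by norm_num) (by norm_num)
    · show ∀ p ∈ Ij a, lam (qd a (12:Fin 16)) p = 0
      rw [qd_eq_monomial a 12 (by decide) (by decide) (by decide),
        show ex 12 = 3 from by decide, show ey 12 = 1 from by decide]
      exact vanish_monomial' a 3 1 (by norm_num) (by norm_num) (by norm_num)
    · show ∀ p ∈ Ij a, lam (qd a (13:Fin 16)) p = 0
      rw [qd_eq_monomial a 13 (by decide) (by decide) (by decide),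
        show ex 13 = 4 from by decide, show ey 13 = 1 from by decide]
      exact vanish_monomial' a 4 1 (by norm_num) (by norm_num) (by norm_num)
    · show ∀ p ∈ Ij a, lam (qd a (14:Fin 16)) p = 0
      rw [qd_eq_monomial a 14 (by decide) (by decide) (by decide),
        show ex 14 = 5 from by decide, show ey 14 = 1 from by decide]
      exact vanish_monomial' a 5 1 (by norm_num) (by norm_num) (by norm_num)
    · show ∀ p ∈ Ij a, lam (qd a (15:Fin 16)) p = 0
      have h15 : qd a 15 = monomial (single 0 6 + single 1 1) (720:F)
          + (monomial (single 0 9 + single 1 0) (-a)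
            + monomial (single 0 2 + single 1 2) (30240*a^2)) := by
        simp only [qd, corr, cf, if_true]
        rw [if_neg (show (15:Fin 16) ≠ 7 by decide),
          if_neg (show (15:Fin 16) ≠ 8 by decide),
          show ex 15 = 6 from by decide, show ey 15 = 1 from by decide]
      rw [h15]
      exact vanish_q15 a
  -- linear independence
  have hXm : ∀ x y : ℕ, (X 0 ^ x * X 1 ^ y : MvPolynomial (Fin 3) F)
      = monomial (single 0 x + single 1 y) 1 := by
    intro x y
    rw [X_pow_eq_monomial, X_pow_eq_monomial, monomial_mul, mul_one]
  have li : LinearIndependent F v := by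
    rw [Fintype.linearIndependent_iff]
    intro g hg j
    have hP : (∑ i, g i • (X 0 ^ ex i * X 1 ^ ey i) : MvPolynomial (Fin 3) F) ∈ Ij a := by
      rw [← Ideal.Quotient.eq_zero_iff_mem, ← Ideal.Quotient.mkₐ_eq_mk F, map_sum]
      simp only [map_smul]
      exact hg
    have h0 := hvan j _ hP
    rw [map_sum] at h0
    simp only [map_smul, hXm, lam_monomial, coeff_qd, smul_eq_mul] at h0
    rw [Finset.sum_eq_single j] at h0
    · rw [if_pos rfl, mul_one] at h0
      rcases mul_eq_zero.mp h0 with h | h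
      · exact h
      · exfalso
        rcases mul_eq_zero.mp h with h' | h'
        · exact cf_ne_zero j h'
        · exact Nat.cast_ne_zero.mpr (fact3_ne_zero _) h'
    · intro b _ hb
      rw [if_neg (Ne.symm hb)]
      ring
    · intro hj
      exact absurd (Finset.mem_univ j) hj
  have b : Module.Basis (Fin 16) F Q := Module.Basis.mk li hspan
  rw [Module.finrank_eq_card_basis b, Fintype.card_fin]

end TjurinaAux

/-- For `f = z² + y³ + x¹⁰ + a·x⁷y` with `a ≠ 0` over a field `F` of characteristic zero,
the Tjurina number `dim_F F[x,y,z]/(f, ∂f/∂x, ∂f/∂y, ∂f/∂z)` equals `16`. -/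
theorem tjurina_wahl_example (F : Type) [Field F] [CharZero F] (a : F) (ha : a ≠ 0) :
    letI f : MvPolynomial (Fin 3) F :=
      X 2 ^ 2 + X 1 ^ 3 + X 0 ^ 10 + C a * X 0 ^ 7 * X 1
    Module.finrank F
      (MvPolynomial (Fin 3) F ⧸
        Ideal.span {f, pderiv 0 f, pderiv 1 f, pderiv 2 f}) = 16 := by
  exact main_aux a ha
end

section
/- Let F be a field of characteristic 0 containing a primitive 30th root of unity. Let X̃ = Spec F[u,v,w,t]/(u³⁰ + v³⁰ + w³⁰ + t u²¹ v¹⁰) with the map to S = Spec F[t]. Let G = μ₃ × μ₁₀ × μ₁₅ act on X̃ by scalar multiplication of roots of unity on u, v, w respectively. Then the assignment x = u³, y = v¹⁰, z = w¹⁵ induces an isomorphism of the invariant ring (F[u,v,w,t]/(u³⁰+v³⁰+w³⁰+tu²¹v¹⁰))^G with F[x,y,z,t]/(z² + y³ + x¹⁰ + t x⁷ y). -/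
open MvPolynomial Finset


variable (F : Type) [Field F]

abbrev Un (n : ℕ) := {x : Fˣ // x ^ n = 1}

noncomputable instance (n : ℕ) [NeZero n] : Fintype (Un F n) :=
  haveI := Fintype.ofFinite (rootsOfUnity n F)
  Fintype.ofEquiv (rootsOfUnity n F) (Equiv.subtypeEquivRight fun x => mem_rootsOfUnity n x)

abbrev GT := {g : Fˣ × Fˣ × Fˣ // g.1 ^ 3 = 1 ∧ g.2.1 ^ 10 = 1 ∧ g.2.2 ^ 15 = 1}

def eG : GT F ≃ Un F 3 × Un F 10 × Un F 15 where
  toFun g := (⟨g.val.1, g.prop.1⟩, ⟨g.val.2.1, g.prop.2.1⟩, ⟨g.val.2.2, g.prop.2.2⟩)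
  invFun p := ⟨(p.1.val, p.2.1.val, p.2.2.val), p.1.prop, p.2.1.prop, p.2.2.prop⟩
  left_inv g := rfl
  right_inv p := rfl

noncomputable instance : Fintype (GT F) := Fintype.ofEquiv _ (eG F).symm

instance : Nonempty (GT F) := ⟨⟨(1,1,1), by simp, by simp, by simp⟩⟩

variable {F : Type} [Field F]

noncomputable def ψF : MvPolynomial (Fin 4) F →ₐ[F] MvPolynomial (Fin 4) F :=
  aeval ![X 0 ^ 3, X 1 ^ 10, X 2 ^ 15, X 3]

noncomputable def Mexp (d : Fin 4 →₀ ℕ) : Fin 4 →₀ ℕ :=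
  Finsupp.equivFunOnFinite.symm ![3 * d 0, 10 * d 1, 15 * d 2, d 3]

lemma Mexp_apply (d : Fin 4 →₀ ℕ) (i : Fin 4) :
    Mexp d i = ![3 * d 0, 10 * d 1, 15 * d 2, d 3] i := rfl

lemma Mexp_injective : Function.Injective Mexp := by
  intro d d' h
  ext i
  fin_cases i <;>
  · have h0 := DFunLike.congr_fun h 0
    have h1 := DFunLike.congr_fun h 1
    have h2 := DFunLike.congr_fun h 2
    have h3 := DFunLike.congr_fun h 3
    simp only [Mexp_apply] at h0 h1 h2 h3
    simp [Matrix.cons_val_zero, Matrix.cons_val_one] at h0 h1 h2 h3 ⊢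
    omega

lemma psi_monomial (d : Fin 4 →₀ ℕ) (c : F) :
    ψF (monomial d c) = monomial (Mexp d) c := by
  have h1 : (monomial d c : MvPolynomial (Fin 4) F) = C c * ∏ i, X i ^ d i := by
    rw [monomial_eq, Finsupp.prod_pow]
  have h2 : (monomial (Mexp d) c : MvPolynomial (Fin 4) F) = C c * ∏ i, X i ^ (Mexp d i) := by
    rw [monomial_eq, Finsupp.prod_pow]
  rw [h1, h2, map_mul, map_prod]
  simp only [Fin.prod_univ_four, map_pow, Mexp_apply]
  simp [ψF, aeval_X, ← pow_mul]

lemma psi_eq_mapDomain (f : MvPolynomial (Fin 4) F) :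
    ψF f = AddMonoidAlgebra.mapDomain Mexp f := by
  induction f using MvPolynomial.induction_on' with
  | monomial d c =>
    rw [psi_monomial, ← single_eq_monomial, ← single_eq_monomial, AddMonoidAlgebra.mapDomain_single]
  | add p q hp hq =>
    rw [map_add, hp, hq]
    exact (AddMonoidAlgebra.mapDomain_add _ _ _).symm

lemma psi_injective : Function.Injective (ψF (F := F)) := by
  intro a b h
  rw [psi_eq_mapDomain, psi_eq_mapDomain] at h
  exact AddMonoidAlgebra.mapDomain_injective Mexp_injective h

noncomputable def scaleF (g : GT F) : MvPolynomial (Fin 4) F →ₐ[F] MvPolynomial (Fin 4) F :=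
  aeval ![C ((g.val.1 : F)) * X 0, C ((g.val.2.1 : F)) * X 1,
    C ((g.val.2.2 : F)) * X 2, X 3]

lemma scaleF_X0 (g : GT F) : scaleF g (X 0) = C ((g.val.1 : F)) * X 0 := by
  simp [scaleF]
lemma scaleF_X1 (g : GT F) : scaleF g (X 1) = C ((g.val.2.1 : F)) * X 1 := by
  simp [scaleF]
lemma scaleF_X2 (g : GT F) : scaleF g (X 2) = C ((g.val.2.2 : F)) * X 2 := by
  simp [scaleF]
lemma scaleF_X3 (g : GT F) : scaleF g (X 3) = X 3 := by
  simp [scaleF]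

lemma g1_pow (g : GT F) : (g.val.1 : F) ^ 3 = 1 := by
  have := g.prop.1; rw [← Units.val_pow_eq_pow_val, this, Units.val_one]
lemma g2_pow (g : GT F) : (g.val.2.1 : F) ^ 10 = 1 := by
  have := g.prop.2.1; rw [← Units.val_pow_eq_pow_val, this, Units.val_one]
lemma g3_pow (g : GT F) : (g.val.2.2 : F) ^ 15 = 1 := by
  have := g.prop.2.2; rw [← Units.val_pow_eq_pow_val, this, Units.val_one]

lemma scaleF_monomial (g : GT F) (e : Fin 4 →₀ ℕ) (c : F) :
    scaleF g (monomial e c) =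
      ((g.val.1 : F) ^ e 0 * (g.val.2.1 : F) ^ e 1 * (g.val.2.2 : F) ^ e 2) • monomial e c := by
  have h1 : (monomial e c : MvPolynomial (Fin 4) F) = C c * ∏ i, X i ^ e i := by
    rw [monomial_eq, Finsupp.prod_pow]
  rw [h1, smul_eq_C_mul]
  simp only [map_mul, map_prod, map_pow, Fin.prod_univ_four, scaleF_X0, scaleF_X1, scaleF_X2,
    scaleF_X3, algHom_C, MvPolynomial.algebraMap_eq, mul_pow, C_mul, C_pow]
  ring

noncomputable def genP : MvPolynomial (Fin 4) F :=
  X 0 ^ 30 + X 1 ^ 30 + X 2 ^ 30 + X 3 * X 0 ^ 21 * X 1 ^ 10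

noncomputable def relP : MvPolynomial (Fin 4) F :=
  X 2 ^ 2 + X 1 ^ 3 + X 0 ^ 10 + X 3 * X 0 ^ 7 * X 1

set_option maxRecDepth 10000 in
lemma psi_rel : ψF (relP (F := F)) = genP := by
  simp only [relP, genP, map_add, map_mul, map_pow, ψF, aeval_X]
  simp only [Matrix.cons_val_zero, Matrix.cons_val_one, Matrix.head_cons,
    Matrix.cons_val_two, Matrix.tail_cons, Matrix.cons_val_three]
  ring

lemma scaleF_gen (g : GT F) : scaleF g genP = genP := by
  have h1 : (g.val.1 : F) ^ 30 = 1 := by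
    rw [show (30:ℕ) = 3 * 10 from rfl, pow_mul, g1_pow, one_pow]
  have h2 : (g.val.2.1 : F) ^ 30 = 1 := by
    rw [show (30:ℕ) = 10 * 3 from rfl, pow_mul, g2_pow, one_pow]
  have h3 : (g.val.2.2 : F) ^ 30 = 1 := by
    rw [show (30:ℕ) = 15 * 2 from rfl, pow_mul, g3_pow, one_pow]
  have h4 : (g.val.1 : F) ^ 21 = 1 := by
    rw [show (21:ℕ) = 3 * 7 from rfl, pow_mul, g1_pow, one_pow]
  simp only [genP, map_add, map_mul, map_pow, scaleF_X0, scaleF_X1, scaleF_X2, scaleF_X3,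
    mul_pow, ← C_pow, h1, h2, h3, h4, g2_pow, C_1, one_mul]

lemma scaleF_comp_psi (g : GT F) : (scaleF g).comp ψF = ψF (F := F) := by
  apply MvPolynomial.algHom_ext
  intro i
  fin_cases i <;>
    simp [ψF, aeval_X, map_pow, scaleF_X0, scaleF_X1, scaleF_X2, scaleF_X3, mul_pow, ← C_pow,
      g1_pow, g2_pow, g3_pow]

variable {F : Type} [Field F]

lemma sum_pow_eq_zero {ζ : F} {n : ℕ} [NeZero n] (hζ : IsPrimitiveRoot ζ n)
    [Fintype {x : Fˣ // x ^ n = 1}] {k : ℕ} (hk : ¬ n ∣ k) :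
    ∑ x : {x : Fˣ // x ^ n = 1}, ((x : Fˣ) : F) ^ k = 0 := by
  have hn : 0 < n := NeZero.pos n
  set u : Fˣ := (hζ.isUnit hn.ne').unit with hu
  have huv : (u : F) = ζ := rfl
  have key : ∑ x : {x : Fˣ // x ^ n = 1}, ((x : Fˣ) : F) ^ k
      = ∑ j ∈ range n, (ζ ^ k) ^ j := by
    refine (Finset.sum_bij (fun j _ => (⟨u ^ j, by
        rw [← pow_mul, mul_comm, pow_mul]
        ext
        push_cast [huv]
        rw [hζ.pow_eq_one, one_pow]⟩ : {x : Fˣ // x ^ n = 1})) ?_ ?_ ?_ ?_).symm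
    · intro a ha; exact Finset.mem_univ _
    · intro a ha b hb h
      simp only [Subtype.mk.injEq] at h
      have : (u : F) ^ a = (u : F) ^ b := by
        rw [← Units.val_pow_eq_pow_val, ← Units.val_pow_eq_pow_val, h]
      exact hζ.pow_inj (mem_range.mp ha) (mem_range.mp hb) (by rwa [huv] at this)
    · intro b _
      have hb1 : ((b : Fˣ) : F) ^ n = 1 := by
        rw [← Units.val_pow_eq_pow_val, b.prop, Units.val_one]
      obtain ⟨i, hi, hie⟩ := hζ.eq_pow_of_pow_eq_one hb1
      refine ⟨i, mem_range.mpr hi, ?_⟩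
      ext
      push_cast [huv]
      exact hie
    · intro a ha
      push_cast [huv]
      rw [← pow_mul, mul_comm, pow_mul]
  rw [key, geom_sum_eq, ← pow_mul, mul_comm, pow_mul, hζ.pow_eq_one, one_pow, sub_self,
    zero_div]
  intro h1
  exact hk ((hζ.pow_eq_one_iff_dvd k).mp h1)

lemma sum_prod_mul {α β : Type} [Fintype α] [Fintype β] (f : α → F) (h : β → F) :
    ∑ p : α × β, f p.1 * h p.2 = (∑ a, f a) * (∑ b, h b) := by
  rw [Finset.sum_mul_sum, Fintype.sum_prod_type]

lemma sum_chi (i j k : ℕ) :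
    ∑ g : GT F, ((g.val.1:F)^i * (g.val.2.1:F)^j * (g.val.2.2:F)^k)
    = (∑ x : Un F 3, ((x:Fˣ):F)^i) * (∑ y : Un F 10, ((y:Fˣ):F)^j)
      * (∑ z : Un F 15, ((z:Fˣ):F)^k) := by
  refine (Fintype.sum_equiv (eG F) _
    (fun p => ((p.1:Fˣ):F)^i * (((p.2.1:Fˣ):F)^j * ((p.2.2:Fˣ):F)^k))
    (fun g => mul_assoc _ _ _)).trans ?_
  refine (sum_prod_mul (fun x : Un F 3 => ((x:Fˣ):F)^i)
    (fun q : Un F 10 × Un F 15 => ((q.1:Fˣ):F)^j * ((q.2:Fˣ):F)^k)).trans ?_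
  rw [sum_prod_mul (fun y : Un F 10 => ((y:Fˣ):F)^j) (fun z : Un F 15 => ((z:Fˣ):F)^k),
    mul_assoc]

lemma monomial_mem_range (e : Fin 4 →₀ ℕ) (c : F) (h0 : 3 ∣ e 0) (h1 : 10 ∣ e 1)
    (h2 : 15 ∣ e 2) : (monomial e c : MvPolynomial (Fin 4) F) ∈ ψF.range := by
  obtain ⟨a, ha⟩ := h0
  obtain ⟨b, hb⟩ := h1
  obtain ⟨d, hd⟩ := h2
  have hMe : Mexp (Finsupp.equivFunOnFinite.symm ![a, b, d, e 3]) = e := by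
    ext i
    fin_cases i <;> simp [Mexp_apply, ha, hb, hd] <;> rfl
  exact (AlgHom.mem_range _).mpr ⟨monomial (Finsupp.equivFunOnFinite.symm ![a, b, d, e 3]) c,
    by rw [psi_monomial, hMe]⟩

lemma sum_scale_mem {ζ : F} (hζ : IsPrimitiveRoot ζ 30) (p : MvPolynomial (Fin 4) F) :
    (∑ g : GT F, scaleF g p) ∈ ψF.range := by
  induction p using MvPolynomial.induction_on' with
  | monomial e c =>
    simp only [scaleF_monomial, ← Finset.sum_smul]
    by_cases h0 : 3 ∣ e 0
    · by_cases h1 : 10 ∣ e 1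
      · by_cases h2 : 15 ∣ e 2
        · exact Subalgebra.smul_mem _ (monomial_mem_range e c h0 h1 h2) _
        · rw [sum_chi, sum_pow_eq_zero (hζ.pow (by norm_num) (by norm_num : 30 = 2 * 15)) h2,
            mul_zero, zero_smul]
          exact Subalgebra.zero_mem _
      · rw [sum_chi, sum_pow_eq_zero (hζ.pow (by norm_num) (by norm_num : 30 = 3 * 10)) h1,
          mul_zero, zero_mul, zero_smul]
        exact Subalgebra.zero_mem _
    · rw [sum_chi, sum_pow_eq_zero (hζ.pow (by norm_num) (by norm_num : 30 = 10 * 3)) h0,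
        zero_mul, zero_mul, zero_smul]
      exact Subalgebra.zero_mem _
  | add p q hp hq =>
    simp only [map_add, Finset.sum_add_distrib]
    exact add_mem hp hq

variable [CharZero F]

lemma cardG_ne_zero : ((Fintype.card (GT F) : F)) ≠ 0 :=
  Nat.cast_ne_zero.mpr Fintype.card_ne_zero

lemma key_ideal {ζ : F} (hζ : IsPrimitiveRoot ζ 30) (f : MvPolynomial (Fin 4) F)
    (hf : ψF f ∈ Ideal.span {genP (F := F)}) : f ∈ Ideal.span {relP (F := F)} := by
  rw [Ideal.mem_span_singleton] at hf
  obtain ⟨h, hh⟩ := hf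
  set N := Fintype.card (GT F) with hN
  have e1 : ∑ g : GT F, scaleF g (ψF f) = N • ψF f := by
    have h1 : ∀ g : GT F, scaleF g (ψF f) = ψF f := fun g =>
      DFunLike.congr_fun (scaleF_comp_psi g) f
    simp [h1, Finset.sum_const, Finset.card_univ, hN]
  have e2 : ∑ g : GT F, scaleF g (ψF f) = (∑ g : GT F, scaleF g h) * genP := by
    rw [Finset.sum_mul]
    refine Finset.sum_congr rfl fun g _ => ?_
    rw [hh, map_mul, scaleF_gen, mul_comm]
  obtain ⟨h₀, hh₀⟩ := sum_scale_mem hζ h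
  have hh₀' : ψF h₀ = ∑ g : GT F, scaleF g h := hh₀
  have e3 : ψF ((N : F) • f) = ψF (h₀ * relP) := by
    rw [map_smul, map_mul, psi_rel, Nat.cast_smul_eq_nsmul, ← e1, e2, hh₀']
  have e4 := psi_injective e3
  rw [Ideal.mem_span_singleton]
  refine ⟨(N : F)⁻¹ • h₀, ?_⟩
  have : f = (N : F)⁻¹ • ((N : F) • f) := by
    rw [smul_smul, inv_mul_cancel₀ cardG_ne_zero, one_smul]
  rw [this, e4, mul_comm h₀ relP]
  exact (mul_smul_comm _ _ _).symm

theorem aux (ζ : F) (hζ : IsPrimitiveRoot ζ 30)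
    (act : GT F → ((MvPolynomial (Fin 4) F ⧸ Ideal.span {genP (F := F)}) →ₐ[F]
      (MvPolynomial (Fin 4) F ⧸ Ideal.span {genP (F := F)})))
    (hact : ∀ g p, act g (Ideal.Quotient.mkₐ F (Ideal.span {genP (F := F)}) p)
      = Ideal.Quotient.mkₐ F (Ideal.span {genP (F := F)}) (scaleF g p)) :
    ∃ Φ : (MvPolynomial (Fin 4) F ⧸ Ideal.span {relP (F := F)}) →ₐ[F]
        (MvPolynomial (Fin 4) F ⧸ Ideal.span {genP (F := F)}),
      (Φ (Ideal.Quotient.mk _ (X 0)) = Ideal.Quotient.mkₐ F (Ideal.span {genP (F := F)}) (X 0 ^ 3)) ∧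
      (Φ (Ideal.Quotient.mk _ (X 1)) = Ideal.Quotient.mkₐ F (Ideal.span {genP (F := F)}) (X 1 ^ 10)) ∧
      (Φ (Ideal.Quotient.mk _ (X 2)) = Ideal.Quotient.mkₐ F (Ideal.span {genP (F := F)}) (X 2 ^ 15)) ∧
      (Φ (Ideal.Quotient.mk _ (X 3)) = Ideal.Quotient.mkₐ F (Ideal.span {genP (F := F)}) (X 3)) ∧
      Function.Injective Φ ∧
      Set.range Φ = {q | ∀ g : GT F, act g q = q} := by
  have hker : ∀ a ∈ Ideal.span {relP (F := F)},
      ((Ideal.Quotient.mkₐ F (Ideal.span {genP (F := F)})).comp ψF) a = 0 := by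
    intro a ha
    rw [Ideal.mem_span_singleton] at ha
    obtain ⟨b, rfl⟩ := ha
    rw [AlgHom.comp_apply, map_mul, psi_rel, Ideal.Quotient.mkₐ_eq_mk,
      Ideal.Quotient.eq_zero_iff_mem]
    exact Ideal.mul_mem_right _ _ (Ideal.subset_span (Set.mem_singleton _))
  refine ⟨Ideal.Quotient.liftₐ _ _ hker, ?_, ?_, ?_, ?_, ?_, ?_⟩
  · rw [Ideal.Quotient.liftₐ_apply]; erw [Ideal.Quotient.lift_mk]
    show Ideal.Quotient.mkₐ F (Ideal.span {genP (F := F)}) (ψF (X 0)) = _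
    rw [show ψF (X 0 : MvPolynomial (Fin 4) F) = X 0 ^ 3 from by simp [ψF]]
  · rw [Ideal.Quotient.liftₐ_apply]; erw [Ideal.Quotient.lift_mk]
    show Ideal.Quotient.mkₐ F (Ideal.span {genP (F := F)}) (ψF (X 1)) = _
    rw [show ψF (X 1 : MvPolynomial (Fin 4) F) = X 1 ^ 10 from by simp [ψF]]
  · rw [Ideal.Quotient.liftₐ_apply]; erw [Ideal.Quotient.lift_mk]
    show Ideal.Quotient.mkₐ F (Ideal.span {genP (F := F)}) (ψF (X 2)) = _
    rw [show ψF (X 2 : MvPolynomial (Fin 4) F) = X 2 ^ 15 from by simp [ψF]]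
  · rw [Ideal.Quotient.liftₐ_apply]; erw [Ideal.Quotient.lift_mk]
    show Ideal.Quotient.mkₐ F (Ideal.span {genP (F := F)}) (ψF (X 3)) = _
    rw [show ψF (X 3 : MvPolynomial (Fin 4) F) = X 3 from by simp [ψF]]
  · refine (injective_iff_map_eq_zero _).mpr ?_
    intro x hx
    obtain ⟨a, rfl⟩ := Ideal.Quotient.mk_surjective x
    rw [Ideal.Quotient.liftₐ_apply] at hx; erw [Ideal.Quotient.lift_mk] at hx
    have hx' : Ideal.Quotient.mk (Ideal.span {genP (F := F)}) (ψF a) = 0 := hx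
    rw [Ideal.Quotient.eq_zero_iff_mem] at hx'
    exact Ideal.Quotient.eq_zero_iff_mem.mpr (key_ideal hζ a hx')
  · ext q
    simp only [Set.mem_range, Set.mem_setOf_eq]
    constructor
    · rintro ⟨x, rfl⟩ g
      obtain ⟨a, rfl⟩ := Ideal.Quotient.mk_surjective x
      show act g (Ideal.Quotient.mkₐ F (Ideal.span {genP (F := F)}) (ψF a)) = _
      rw [hact g (ψF a)]
      have h1 : scaleF g (ψF a) = ψF a := DFunLike.congr_fun (scaleF_comp_psi g) a
      rw [h1]
      rfl
    · intro hq
      obtain ⟨p, rfl⟩ := Ideal.Quotient.mkₐ_surjective F (Ideal.span {genP (F := F)}) q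
      have e1 : ∑ g : GT F, act g (Ideal.Quotient.mkₐ F (Ideal.span {genP (F := F)}) p)
          = Fintype.card (GT F) • (Ideal.Quotient.mkₐ F (Ideal.span {genP (F := F)}) p) := by
        rw [Finset.sum_congr rfl fun g _ => hq g, Finset.sum_const, Finset.card_univ]
      have e2 : ∑ g : GT F, act g (Ideal.Quotient.mkₐ F (Ideal.span {genP (F := F)}) p)
          = Ideal.Quotient.mkₐ F (Ideal.span {genP (F := F)}) (∑ g : GT F, scaleF g p) := by
        rw [map_sum]
        exact Finset.sum_congr rfl fun g _ => hact g p
      obtain ⟨p₀, hp₀⟩ := sum_scale_mem hζ p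
      have hp₀' : ψF p₀ = ∑ g : GT F, scaleF g p := hp₀
      have e3 : Ideal.Quotient.mkₐ F (Ideal.span {genP (F := F)}) p
          = Ideal.Quotient.mkₐ F (Ideal.span {genP (F := F)})
            (ψF ((Fintype.card (GT F) : F)⁻¹ • p₀)) := by
        have key : (Fintype.card (GT F) : F) • Ideal.Quotient.mkₐ F (Ideal.span {genP (F := F)}) p
            = Ideal.Quotient.mkₐ F (Ideal.span {genP (F := F)}) (ψF p₀) := by
          rw [Nat.cast_smul_eq_nsmul, ← e1, e2, hp₀']
        calc Ideal.Quotient.mkₐ F (Ideal.span {genP (F := F)}) p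
            = (Fintype.card (GT F) : F)⁻¹ • ((Fintype.card (GT F) : F) •
              Ideal.Quotient.mkₐ F (Ideal.span {genP (F := F)}) p) := by
              rw [smul_smul, inv_mul_cancel₀ cardG_ne_zero, one_smul]
          _ = (Fintype.card (GT F) : F)⁻¹ •
              Ideal.Quotient.mkₐ F (Ideal.span {genP (F := F)}) (ψF p₀) := by rw [key]
          _ = Ideal.Quotient.mkₐ F (Ideal.span {genP (F := F)})
              (ψF ((Fintype.card (GT F) : F)⁻¹ • p₀)) := by rw [map_smul, map_smul]
      refine ⟨Ideal.Quotient.mk _ ((Fintype.card (GT F) : F)⁻¹ • p₀), ?_⟩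
      rw [Ideal.Quotient.liftₐ_apply]; erw [Ideal.Quotient.lift_mk]
      exact e3.symm

/-- Let `F` be a field of characteristic zero containing a primitive 30th root of unity,
`X̃ = Spec F[u,v,w,t]/(u³⁰ + v³⁰ + w³⁰ + t·u²¹v¹⁰)`, and let
`G = μ₃ × μ₁₀ × μ₁₅` act on `X̃` by scalar multiplication by roots of unity on `u, v, w`
(fixing `t`).  Then the assignment `x = u³`, `y = v¹⁰`, `z = w¹⁵`, `t = t` induces an
isomorphism of `F[x,y,z,t]/(z² + y³ + x¹⁰ + t·x⁷y)` onto the invariant ring of the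
`G`-action: the induced algebra map is injective with image the ring of `G`-invariants. -/
theorem invariant_ring_iso (F : Type) [Field F] [CharZero F]
    (ζ : F) (hζ : IsPrimitiveRoot ζ 30) :
    letI P := MvPolynomial (Fin 4) F
    letI gen : P := X 0 ^ 30 + X 1 ^ 30 + X 2 ^ 30 + X 3 * X 0 ^ 21 * X 1 ^ 10
    letI Q := P ⧸ Ideal.span {gen}
    letI π : P →ₐ[F] Q := Ideal.Quotient.mkₐ F (Ideal.span {gen})
    letI G := {g : Fˣ × Fˣ × Fˣ // g.1 ^ 3 = 1 ∧ g.2.1 ^ 10 = 1 ∧ g.2.2 ^ 15 = 1}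
    letI scale : G → (P →ₐ[F] P) := fun g =>
      aeval ![C ((g.val.1 : F)) * X 0, C ((g.val.2.1 : F)) * X 1,
        C ((g.val.2.2 : F)) * X 2, X 3]
    -- for any action on the quotient induced by the scaling action on `F[u,v,w,t]` …
    ∀ act : G → (Q →ₐ[F] Q), (∀ g p, act g (π p) = π (scale g p)) →
    -- … the map `x ↦ u³, y ↦ v¹⁰, z ↦ w¹⁵, t ↦ t` identifies
    -- `F[x,y,z,t]/(z² + y³ + x¹⁰ + t·x⁷y)` with the ring of `G`-invariants of `Q`:
    ∃ Φ : (MvPolynomial (Fin 4) F ⧸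
        Ideal.span {(X 2 ^ 2 + X 1 ^ 3 + X 0 ^ 10 + X 3 * X 0 ^ 7 * X 1 :
          MvPolynomial (Fin 4) F)}) →ₐ[F] Q,
      (Φ (Ideal.Quotient.mk _ (X 0)) = π (X 0 ^ 3)) ∧
      (Φ (Ideal.Quotient.mk _ (X 1)) = π (X 1 ^ 10)) ∧
      (Φ (Ideal.Quotient.mk _ (X 2)) = π (X 2 ^ 15)) ∧
      (Φ (Ideal.Quotient.mk _ (X 3)) = π (X 3)) ∧
      Function.Injective Φ ∧
      Set.range Φ = {q : Q | ∀ g : G, act g q = q} := by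
  intro act hact
  exact aux ζ hζ act hact
end

section
/- Let F be an algebraic field extension of ℚ and R = F[x,y,z]/(z² + y³ + x¹⁰ + x⁷y). Granting that NK₀(R) ≅ H¹_cdh(R, Ω¹) ⊗_ℚ tℚ[t] and NK₋₁(R) ≅ H¹_cdh(R, O) ⊗_ℚ tℚ[t], and that H¹_cdh(R, Ω¹) = 0 while H¹_cdh(R, O) ≅ F, conclude: K₀(R[t]) ≅ K₀(R) but K₀(R[t₁,t₂]) ≇ K₀(R); in particular the answer to Bass' question (does K₀(R) = K₀(R[t]) imply K₀(R) = K₀(R[t₁,t₂])?) is negative. -/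
set_option synthInstance.maxHeartbeats 1000000

open CategoryTheory MvPolynomial

open CategoryTheory in
theorem bass_aux {R Rt Rtt : CommRingCat} (K₀ : CommRingCat ⥤ AddCommGrpCat)
    (ι₁ : R ⟶ Rt) (ι₂ : R ⟶ Rtt) (ev₁ : Rt ⟶ R) (hcomp : ι₁ ≫ ev₁ = 𝟙 R)
    {T : Type} [Add T] [Zero T] (w : T) (hw : w ≠ 0)
    (hker0 : Subsingleton (AddMonoidHom.ker (K₀.map ev₁).hom))
    (htt : AddMonoidHom.ker (K₀.map ev₁).hom = ⊥ →
      ∃ e : K₀.obj Rtt ≃+ (K₀.obj R) × T, ∀ x, e (K₀.map ι₂ x) = (x, 0)) :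
    Function.Bijective (K₀.map ι₁) ∧ ¬ Function.Bijective (K₀.map ι₂) := by
  have hker : AddMonoidHom.ker (K₀.map ev₁).hom = ⊥ := by
    ext x
    simp only [AddSubgroup.mem_bot]
    constructor
    · intro hx
      have := Subsingleton.elim (⟨x, hx⟩ : AddMonoidHom.ker (K₀.map ev₁).hom)
        ⟨0, (AddMonoidHom.ker (K₀.map ev₁).hom).zero_mem⟩
      exact congrArg Subtype.val this
    · rintro rfl; exact (AddMonoidHom.ker (K₀.map ev₁).hom).zero_mem
  have hinj : Function.Injective (K₀.map ev₁) :=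
    (AddMonoidHom.ker_eq_bot_iff _).mp hker
  have hid : ∀ x, (K₀.map ev₁) ((K₀.map ι₁) x) = x := by
    intro x
    have : K₀.map ι₁ ≫ K₀.map ev₁ = 𝟙 (K₀.obj R) := by
      rw [← K₀.map_comp, hcomp, K₀.map_id]
    simpa using congrArg (fun f : K₀.obj R ⟶ K₀.obj R => f x) this
  constructor
  · constructor
    · intro a b hab
      have := congrArg (K₀.map ev₁) hab
      rwa [hid, hid] at this
    · intro y
      refine ⟨K₀.map ev₁ y, hinj ?_⟩
      rw [hid]
  · obtain ⟨e, he⟩ := htt hker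
    rintro ⟨-, hsurj⟩
    obtain ⟨x, hx⟩ := hsurj (e.symm (0, w))
    have : e (K₀.map ι₂ x) = (0, w) := by rw [hx, e.apply_symm_apply]
    rw [he x] at this
    exact hw ((Prod.ext_iff.mp this).2).symm

/-- Let `F` be an algebraic field extension of `ℚ` and
`R = F[x,y,z]/(z² + y³ + x¹⁰ + x⁷y)`.  Granting (for functors `K₀`, `Kminus1` to abelian
groups) that `NK₀(R) ≅ H¹_cdh(R, Ω¹) ⊗_ℚ tℚ[t]` and `NKminus1(R) ≅ H¹_cdh(R, O) ⊗_ℚ tℚ[t]`,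
that `H¹_cdh(R, Ω¹) = 0` while `H¹_cdh(R, O) ≅ F`, and that when `NK₀(R) = 0` one has
`K₀(R[t₁,t₂]) ≅ K₀(R) ⊕ (NKminus1(R) ⊗_ℚ Ω¹_{ℚ[t]})` compatibly with the canonical map,
we conclude: the canonical map `K₀(R) → K₀(R[t])` is an isomorphism, but the canonical
map `K₀(R) → K₀(R[t₁,t₂])` is not; so the answer to Bass' question is negative. -/
theorem bass_question_negative_answer (F : Type) [Field F] [CharZero F]
    [Algebra.IsAlgebraic ℚ F]
    (K₀ Kminus1 : CommRingCat ⥤ AddCommGrpCat)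
    (H1O H1Ω : Type) [AddCommGroup H1O] [Module ℚ H1O] [AddCommGroup H1Ω] [Module ℚ H1Ω] :
    letI Rring := MvPolynomial (Fin 3) F ⧸
      Ideal.span {(X 2 ^ 2 + X 1 ^ 3 + X 0 ^ 10 + X 0 ^ 7 * X 1 : MvPolynomial (Fin 3) F)}
    letI R : CommRingCat := CommRingCat.of Rring
    letI Rt : CommRingCat := CommRingCat.of (Polynomial Rring)
    letI Rtt : CommRingCat := CommRingCat.of (MvPolynomial (Fin 2) Rring)
    letI ι₁ : R ⟶ Rt := CommRingCat.ofHom Polynomial.C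
    letI ι₂ : R ⟶ Rtt := CommRingCat.ofHom MvPolynomial.C
    letI ev₁ : Rt ⟶ R := CommRingCat.ofHom (Polynomial.evalRingHom 0)
    letI V := (Ideal.span {(Polynomial.X : Polynomial ℚ)} :
      Ideal (Polynomial ℚ))  -- `tℚ[t]`
    letI W := Ω[Polynomial ℚ⁄ℚ]  -- `Ω¹_{ℚ[t]}`
    -- granting `H¹_cdh(R, Ω¹) = 0` and `H¹_cdh(R, O) ≅ F`:
    Subsingleton H1Ω →
    Nonempty (H1O ≃ₗ[ℚ] F) →
    -- granting `NK₀(R) ≅ H¹_cdh(R, Ω¹) ⊗_ℚ tℚ[t]` and `NKminus1(R) ≅ H¹_cdh(R, O) ⊗_ℚ tℚ[t]`: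
    Nonempty ((AddMonoidHom.ker (K₀.map ev₁).hom) ≃+ TensorProduct ℚ H1Ω V) →
    Nonempty ((AddMonoidHom.ker (Kminus1.map ev₁).hom) ≃+ TensorProduct ℚ H1O V) →
    -- granting that if `NK₀(R) = 0` then
    -- `K₀(R[t₁,t₂]) ≅ K₀(R) ⊕ (NKminus1(R) ⊗_ℚ Ω¹_{ℚ[t]})` compatibly with the canonical map:
    (AddMonoidHom.ker (K₀.map ev₁).hom = ⊥ →
      ∃ e : K₀.obj Rtt ≃+ (K₀.obj R) × TensorProduct ℚ (TensorProduct ℚ H1O V) W,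
        ∀ x, e (K₀.map ι₂ x) = (x, 0)) →
    -- conclusion: `K₀(R) = K₀(R[t])` but `K₀(R) ≠ K₀(R[t₁,t₂])`:
    Function.Bijective (K₀.map ι₁) ∧ ¬ Function.Bijective (K₀.map ι₂) := by
  intro hΩ ⟨eF⟩ ⟨eO⟩ ⟨eK0⟩ htt
  -- a nonzero element of `(H1O ⊗ V) ⊗ W`, detected by a linear functional
  obtain ⟨f, hf⟩ : ∃ f : Module.Dual ℚ H1O, f (eF.symm 1) ≠ 0 := by
    by_contra h
    push_neg at h
    have h1 : eF.symm 1 = 0 := (Module.forall_dual_apply_eq_zero_iff ℚ _).mp h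
    have := congrArg eF h1
    simp at this
  let V := (Ideal.span {(Polynomial.X : Polynomial ℚ)} : Ideal (Polynomial ℚ))
  let φ₂ : V →ₗ[ℚ] ℚ :=
    (Polynomial.lcoeff ℚ 1).comp (V.subtype.restrictScalars ℚ)
  let δ : Ω[Polynomial ℚ⁄ℚ] →ₗ[Polynomial ℚ] Polynomial ℚ :=
    (Polynomial.derivative' (R := ℚ)).liftKaehlerDifferential
  let φ₃ : Ω[Polynomial ℚ⁄ℚ] →ₗ[ℚ] ℚ :=
    (Polynomial.lcoeff ℚ 0).comp (δ.restrictScalars ℚ)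
  let Φ : TensorProduct ℚ (TensorProduct ℚ H1O V) (Ω[Polynomial ℚ⁄ℚ]) →ₗ[ℚ] ℚ :=
    (TensorProduct.lid ℚ ℚ).toLinearMap.comp
      (TensorProduct.map
        ((TensorProduct.lid ℚ ℚ).toLinearMap.comp (TensorProduct.map f φ₂)) φ₃)
  let w : TensorProduct ℚ (TensorProduct ℚ H1O V) (Ω[Polynomial ℚ⁄ℚ]) :=
    TensorProduct.tmul ℚ
      (TensorProduct.tmul ℚ (eF.symm 1) (⟨Polynomial.X, Ideal.subset_span rfl⟩ : V))
      (KaehlerDifferential.D ℚ (Polynomial ℚ) Polynomial.X)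
  have hΦw : Φ w = f (eF.symm 1) := by
    simp only [Φ, w, LinearMap.comp_apply, TensorProduct.map_tmul,
      TensorProduct.lid_tmul, LinearEquiv.coe_coe, LinearMap.restrictScalars_apply,
      Submodule.coe_subtype, Derivation.liftKaehlerDifferential_comp_D, δ, φ₂, φ₃,
      Polynomial.derivative'_apply, Polynomial.derivative_X, Polynomial.lcoeff_apply,
      Polynomial.coeff_X_one, Polynomial.coeff_one_zero, smul_eq_mul]
    ring
  have hw : w ≠ 0 := by
    intro h0
    rw [h0, map_zero] at hΦw
    exact hf hΦw.symm
  have hcomp : CommRingCat.ofHom (Polynomial.C) ≫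
      CommRingCat.ofHom (Polynomial.evalRingHom 0) =
      𝟙 (CommRingCat.of (MvPolynomial (Fin 3) F ⧸
        Ideal.span {(X 2 ^ 2 + X 1 ^ 3 + X 0 ^ 10 + X 0 ^ 7 * X 1 : MvPolynomial (Fin 3) F)})) := by
    apply CommRingCat.hom_ext; apply RingHom.ext; intro x
    simp
  exact bass_aux K₀ _ _ _ hcomp w hw eO.toEquiv.subsingleton htt
end
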